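/- Let T be the Cayley graph of the free group F_∞ on countably many generators (the ℵ₀-regular tree) and λ : Aut(T) → U(ℓ₂(T)) the unitary representation λ(g)x = x(g⁻¹·). Then λ is irreducible: the only closed λ(Aut(T))-invariant subspaces of ℓ₂(T) are {0} and ℓ₂(T). -/

import Mathlib

open scoped ENNReal

noncomputable section

/-- The vertex set of the `ℵ₀`-regular tree, realised as the free group `F_∞`. -/
abbrev V : Type := FreeGroup ℕ

/-- The Cayley graph of `F_∞` with respect to its free generating set:
the `ℵ₀`-regular tree `T`. -/
def treeGraph : SimpleGraph V :=
  SimpleGraph.fromRel (fun s t => ∃ i : ℕ, t = s * FreeGroup.of i)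

/-- The automorphism group `Aut(T)` of the `ℵ₀`-regular tree. -/
abbrev TreeAut := treeGraph ≃g treeGraph

/-- `ℓ_p(T)`. -/
abbrev lpT (p : ℝ≥0∞) := lp (fun _ : V => ℂ) p

lemma memℓp_comp {p : ℝ≥0∞} (g : V ≃ V) {x : V → ℂ} (h : Memℓp x p) :
    Memℓp (fun v => x (g v)) p := by
  rcases ENNReal.trichotomy p with rfl | rfl | hp
  · rw [memℓp_zero_iff] at h ⊢
    exact Set.Finite.preimage g.injective.injOn h
  · rw [memℓp_infty_iff] at h ⊢
    apply h.mono
    rintro r ⟨v, rfl⟩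
    exact ⟨g v, rfl⟩
  · apply memℓp_gen
    exact (g.summable_iff (f := fun v => ‖x v‖ ^ p.toReal)).2 ((memℓp_gen_iff hp).1 h)

/-- The shift representation of permutations of `T` on `ℂ^T`: `λ(g)x = x(g⁻¹ ·)`. -/
def lamFull (g : V ≃ V) : (V → ℂ) →ₗ[ℂ] (V → ℂ) where
  toFun x := fun v => x (g.symm v)
  map_add' _ _ := rfl
  map_smul' _ _ := rfl

/-- The shift representation of permutations of `T` on `ℓ_p(T)`: `λ(g)x = x(g⁻¹ ·)`. -/
def lam (p : ℝ≥0∞) (g : V ≃ V) : lpT p →ₗ[ℂ] lpT p where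
  toFun x := ⟨fun v => x (g.symm v), memℓp_comp g.symm (lp.memℓp x)⟩
  map_add' _ _ := rfl
  map_smul' _ _ := rfl

lemma adj_map (σ : ℕ ≃ ℕ) {s t : V} (h : treeGraph.Adj s t) :
    treeGraph.Adj (FreeGroup.map σ s) (FreeGroup.map σ t) := by
  rw [treeGraph, SimpleGraph.fromRel_adj] at h ⊢
  obtain ⟨hne, h⟩ := h
  refine ⟨fun he => hne ((FreeGroup.freeGroupCongr σ).injective he), ?_⟩
  rcases h with ⟨i, rfl⟩ | ⟨i, rfl⟩
  · exact Or.inl ⟨σ i, by simp⟩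
  · exact Or.inr ⟨σ i, by simp⟩

/-- The automorphism of `T` induced by a permutation of the generators. -/
def mapAut (σ : ℕ ≃ ℕ) : TreeAut where
  toEquiv := (FreeGroup.freeGroupCongr σ).toEquiv
  map_rel_iff' := by
    intro s t
    constructor
    · intro h
      have := adj_map σ.symm h
      simpa [FreeGroup.map.comp, Function.comp] using this
    · exact adj_map σ

lemma adj_mul (a : V) {s t : V} (h : treeGraph.Adj s t) :
    treeGraph.Adj (a * s) (a * t) := by
  rw [treeGraph, SimpleGraph.fromRel_adj] at h ⊢
  obtain ⟨hne, h⟩ := h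
  refine ⟨fun he => hne (mul_left_cancel he), ?_⟩
  rcases h with ⟨i, rfl⟩ | ⟨i, rfl⟩
  · exact Or.inl ⟨i, by rw [mul_assoc]⟩
  · exact Or.inr ⟨i, by rw [mul_assoc]⟩

/-- The automorphism of `T` given by left translation. -/
def leftAut (a : V) : TreeAut where
  toEquiv := Equiv.mulLeft a
  map_rel_iff' := by
    intro s t
    constructor
    · intro h
      have := adj_mul a⁻¹ h
      simpa [← mul_assoc] using this
    · exact adj_mul a

lemma reduce_map {f : ℕ → ℕ} (hf : Function.Injective f) (L : List (ℕ × Bool)) :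
    FreeGroup.reduce (L.map (fun p => (f p.1, p.2))) =
      (FreeGroup.reduce L).map (fun p => (f p.1, p.2)) := by
  induction L with
  | nil => rfl
  | cons x L ih =>
    rw [List.map_cons, FreeGroup.reduce.cons, FreeGroup.reduce.cons, ih]
    cases h : FreeGroup.reduce L with
    | nil => rfl
    | cons hd tl =>
      simp only [List.map_cons]
      by_cases hx : x.1 = hd.1 ∧ x.2 = !hd.2
      · rw [if_pos ⟨congrArg f hx.1, hx.2⟩, if_pos hx]
      · rw [if_neg (fun hc => hx ⟨hf hc.1, hc.2⟩), if_neg hx]; simp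

lemma toWord_map (σ : ℕ ≃ ℕ) (u : V) :
    (FreeGroup.map σ u).toWord = u.toWord.map (fun p => (σ p.1, p.2)) := by
  conv_lhs => rw [← FreeGroup.mk_toWord (x := u)]
  rw [FreeGroup.map.mk, FreeGroup.toWord_mk, reduce_map σ.injective,
    FreeGroup.reduce_toWord]

lemma mapAut_apply (σ : ℕ ≃ ℕ) (v : V) : mapAut σ v = FreeGroup.map σ v := rfl

lemma leftAut_apply (a : V) (v : V) : leftAut a v = a * v := rfl

lemma orbit_map_injective {u : V} (hu : u ≠ 1) :
    Function.Injective (fun k : ℕ => FreeGroup.map (Equiv.swap (u.toWord.head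
      (fun h => hu (FreeGroup.toWord_eq_nil_iff.1 h))).1 k) u) := by
  classical
  have hL : u.toWord ≠ [] := fun h => hu (FreeGroup.toWord_eq_nil_iff.1 h)
  set i₀ := (u.toWord.head hL).1 with hi₀
  intro n m h
  have h' := congrArg FreeGroup.toWord h
  simp only [toWord_map] at h'
  have hhead := congrArg (fun w => (w.head? ).map Prod.fst) h'
  rcases List.exists_cons_of_ne_nil hL with ⟨p₀, L', hL'⟩
  have hp₀ : p₀.1 = i₀ := by
    have h1 : u.toWord.head? = some p₀ := by rw [hL']; rfl
    have h2 : u.toWord.head? = some (u.toWord.head hL) := List.head?_eq_head _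
    rw [h1] at h2
    rw [hi₀, ← Option.some.inj h2]
  simp only [hL', List.map_cons, List.head?_cons, Option.map_some] at hhead
  rw [hp₀] at hhead
  simpa [Equiv.swap_apply_left] using hhead

/-- A vector invariant under the stabiliser of `t` vanishes away from `t`. -/
lemma stab_invariant_vanish {t : V} (y : lpT 2)
    (hy : ∀ g : TreeAut, g t = t → ∀ v : V, y (g v) = y v)
    {s : V} (hs : s ≠ t) : y s = 0 := by
  classical
  set u : V := t⁻¹ * s with hu_def
  have hu : u ≠ 1 := by
    simp only [hu_def, Ne, inv_mul_eq_one]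
    exact fun h => hs h.symm
  have hL : u.toWord ≠ [] := fun h => hu (FreeGroup.toWord_eq_nil_iff.1 h)
  set i₀ := (u.toWord.head hL).1 with hi₀
  set φ : ℕ → V := fun k => t * FreeGroup.map (Equiv.swap i₀ k) u with hφ
  have hφinj : Function.Injective φ := fun n m h =>
    orbit_map_injective hu (mul_left_cancel h)
  -- each φ k is in the orbit of s under the stabiliser of t
  have hval : ∀ k, y (φ k) = y s := by
    intro k
    set g : TreeAut := ((leftAut t⁻¹).trans (mapAut (Equiv.swap i₀ k))).trans (leftAut t) with hg
    have hgapp : ∀ v : V, g v = t * FreeGroup.map (Equiv.swap i₀ k) (t⁻¹ * v) := by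
      intro v
      simp [hg, RelIso.trans_apply, leftAut_apply, mapAut_apply]
    have hgt : g t = t := by
      rw [hgapp, inv_mul_cancel, map_one, mul_one]
    have := hy g hgt s
    rw [hgapp] at this
    simpa [hφ, hu_def] using this
  have hsum : Summable (fun v : V => ‖y v‖ ^ (2 : ℝ≥0∞).toReal) :=
    (memℓp_gen_iff (by norm_num)).1 (lp.memℓp y)
  have hsum2 : Summable (fun _ : ℕ => ‖y s‖ ^ (2 : ℝ≥0∞).toReal) := by
    refine Summable.congr (hsum.comp_injective hφinj) fun k => ?_
    simp [Function.comp, hval k]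
  have h0 : ‖y s‖ ^ (2 : ℝ≥0∞).toReal = 0 := (summable_const_iff _).1 hsum2
  have : ‖y s‖ = 0 := by
    have h2 : (2 : ℝ≥0∞).toReal = 2 := by norm_num
    rw [h2] at h0
    exact (Real.rpow_eq_zero (norm_nonneg _) two_ne_zero).1 h0
  simpa using this

local notation "⟪" x ", " y "⟫" => @inner ℂ _ _ x y

lemma lam_apply (p : ℝ≥0∞) (g : V ≃ V) (x : lpT p) (v : V) :
    (lam p g x : V → ℂ) v = x (g.symm v) := rfl

lemma lam_single (g : V ≃ V) (t : V) :
    lam 2 g (lp.single 2 t 1) = lp.single 2 (g t) (1 : ℂ) := by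
  apply lp.ext
  funext v
  rw [lam_apply]
  by_cases h : v = g t
  · have h' : g.symm v = t := (Equiv.symm_apply_eq g).2 h
    rw [h', lp.single_apply_self, h, lp.single_apply_self]
  · rw [lp.single_apply_ne _ _ _ (fun hc => h ((Equiv.symm_apply_eq g).1 hc)),
      lp.single_apply_ne _ _ _ h]

lemma inner_lam (g : V ≃ V) (x y : lpT 2) : ⟪lam 2 g x, lam 2 g y⟫ = ⟪x, y⟫ := by
  rw [lp.inner_eq_tsum, lp.inner_eq_tsum]
  exact g.symm.tsum_eq (fun v => ⟪x v, y v⟫)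

lemma lam_lam (g : V ≃ V) (x : lpT 2) : lam 2 g.symm (lam 2 g x) = x := by
  apply lp.ext; funext v; simp [lam_apply]

/-- The unitary representation `λ : Aut(T) → U(ℓ₂(T))` is irreducible: the only closed
`λ(Aut(T))`-invariant subspaces of `ℓ₂(T)` are `{0}` and `ℓ₂(T)`. -/
theorem treeRep_irreducible (W : Submodule ℂ (lpT 2))
    (hclosed : IsClosed (W : Set (lpT 2)))
    (hinv : ∀ g : TreeAut, ∀ x ∈ W, lam 2 g.toEquiv x ∈ W) :
    W = ⊥ ∨ W = ⊤ := by
  classical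
  haveI : CompleteSpace W := hclosed.completeSpace_coe
  set δ : V → lpT 2 := fun t => lp.single 2 t 1 with hδ
  have hδinner : ∀ (t : V) (x : lpT 2), ⟪δ t, x⟫ = x t := by
    intro t x
    rw [hδ, lp.inner_single_left]
    simp [RCLike.inner_apply]
  have hlamδ : ∀ (g : TreeAut) (t : V), lam 2 g.toEquiv (δ t) = δ (g t) :=
    fun g t => lam_single g.toEquiv t
  -- Wᗮ is invariant
  have hinv' : ∀ g : TreeAut, ∀ y ∈ Wᗮ, lam 2 g.toEquiv y ∈ Wᗮ := by
    intro g y hy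
    intro w hw
    have h1 : lam 2 g.symm.toEquiv w ∈ W := hinv g.symm w hw
    have := hy _ h1
    calc ⟪w, lam 2 g.toEquiv y⟫ = ⟪lam 2 g.toEquiv (lam 2 g.symm.toEquiv w), lam 2 g.toEquiv y⟫ := by
          congr 1
          have : g.symm.toEquiv = g.toEquiv.symm := rfl
          rw [this]
          exact (lam_lam g.toEquiv.symm w).symm ▸ rfl
      _ = ⟪lam 2 g.symm.toEquiv w, y⟫ := inner_lam _ _ _
      _ = 0 := this
  set P : lpT 2 → lpT 2 := fun x => (W.orthogonalProjectionOnto x : lpT 2) with hP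
  have hPmem : ∀ x, P x ∈ W := fun x => (W.orthogonalProjectionOnto x).2
  have hPcomm : ∀ (g : TreeAut) (x : lpT 2), P (lam 2 g.toEquiv x) = lam 2 g.toEquiv (P x) := by
    intro g x
    apply Submodule.eq_starProjection_of_mem_orthogonal (hinv g _ (hPmem x))
    rw [← map_sub]
    exact hinv' g _ (Submodule.sub_starProjection_mem_orthogonal x)
  set c : ℂ := (P (δ 1) : V → ℂ) 1 with hc
  have hstab : ∀ s : V, s ≠ 1 → (P (δ 1) : V → ℂ) s = 0 := by
    intro s hs
    apply stab_invariant_vanish (t := (1 : V)) (P (δ 1)) _ hs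
    intro g hg v
    have h1 : lam 2 g.toEquiv (P (δ 1)) = P (δ 1) := by
      rw [← hPcomm, hlamδ, hg]
    have h2 : ((lam 2 g.toEquiv (P (δ 1)) : lpT 2) : V → ℂ) (g v)
        = (P (δ 1) : V → ℂ) (g v) := by rw [h1]
    rw [lam_apply] at h2
    have h3 : ∀ w : V, g.toEquiv.symm (g w) = w := fun w => g.toEquiv.symm_apply_apply w
    rw [h3] at h2
    exact h2.symm
  have hPδ1 : P (δ 1) = c • δ 1 := by
    apply lp.ext; funext v
    by_cases hv : v = 1
    · subst hv
      simp only [lp.coeFn_smul, Pi.smul_apply, hδ]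
      rw [lp.single_apply_self]
      simp [hc, hδ]
    · rw [hstab v hv]
      simp only [lp.coeFn_smul, Pi.smul_apply, hδ]
      rw [lp.single_apply_ne _ _ _ hv]
      simp
  have hPδ : ∀ t : V, P (δ t) = c • δ t := by
    intro t
    have hg1 : leftAut t 1 = t := by rw [leftAut_apply, mul_one]
    calc P (δ t) = P (lam 2 (leftAut t).toEquiv (δ 1)) := by rw [hlamδ, hg1]
      _ = lam 2 (leftAut t).toEquiv (P (δ 1)) := hPcomm _ _
      _ = lam 2 (leftAut t).toEquiv (c • δ 1) := by rw [hPδ1]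
      _ = c • lam 2 (leftAut t).toEquiv (δ 1) := map_smul _ _ _
      _ = c • δ t := by rw [hlamδ, hg1]
  by_cases hc0 : c = 0
  · left
    rw [eq_bot_iff]
    intro x hx
    have hx0 : ∀ t : V, (x : V → ℂ) t = 0 := by
      intro t
      have hδperp : δ t ∈ Wᗮ := by
        rw [Submodule.mem_orthogonal]
        intro w hw
        have : ⟪δ t, w⟫ = ⟪δ t - P (δ t), w⟫ := by
          rw [hPδ, hc0, zero_smul, sub_zero]
        rw [inner_eq_zero_symm]
        rw [this]
        exact (Submodule.mem_orthogonal' _ _).1 (Submodule.sub_starProjection_mem_orthogonal (δ t)) w hw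
      rw [← hδinner t x, inner_eq_zero_symm]
      exact hδperp x hx
    simp only [Submodule.mem_bot]
    apply lp.ext; funext v; simpa using hx0 v
  · right
    have hδW : ∀ t : V, δ t ∈ W := by
      intro t
      have : δ t = c⁻¹ • P (δ t) := by rw [hPδ, smul_smul, inv_mul_cancel₀ hc0, one_smul]
      rw [this]
      exact W.smul_mem _ (hPmem _)
    have hWperp : Wᗮ = ⊥ := by
      rw [eq_bot_iff]
      intro y hy
      simp only [Submodule.mem_bot]
      apply lp.ext; funext t
      have := hy (δ t) (hδW t)
      rw [hδinner t y] at this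
      simpa using this
    calc W = Wᗮᗮ := (Submodule.orthogonal_orthogonal W).symm
      _ = ⊤ := by rw [hWperp, Submodule.bot_orthogonal_eq_top]
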